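/- Let d ≥ 1, R > 0, δ > 0 and C₀ ≥ 0 with C₀δ < 1. Let p : ℝ^d → ℝ be continuously differentiable and suppose sup_{x ∈ (−R,R)^d} |∇p(x)| ≤ C₀ sup_{x ∈ (−R,R)^d} |p(x)|, where |∇p(x)| is the Euclidean norm of the gradient. Let x_1, …, x_N ∈ (−R,R)^d be points such that min_{1 ≤ j ≤ N} |x − x_j| ≤ δ for every x ∈ (−R,R)^d, and suppose |p(x_j)| ≤ 1 for all j = 1, …, N. Then sup_{x ∈ (−R,R)^d} |p(x)| ≤ 1/(1 − C₀δ). -/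

import Mathlib

/-- The open cube `(-R, R)^d` in `ℝ^d`. -/
def cube (d : ℕ) (R : ℝ) : Set (EuclideanSpace ℝ (Fin d)) := {y | ∀ i, |y i| < R}

theorem cube_convex (d : ℕ) (R : ℝ) : Convex ℝ (cube d R) := by
  intro a ha b hb s t hs ht hst
  intro i
  have : |(s • a + t • b) i| ≤ s * |a i| + t * |b i| := by
    simp only [PiLp.add_apply, PiLp.smul_apply, smul_eq_mul]
    calc |s * a i + t * b i| ≤ |s * a i| + |t * b i| := abs_add_le _ _
      _ = s * |a i| + t * |b i| := by rw [abs_mul, abs_mul, abs_of_nonneg hs, abs_of_nonneg ht]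
  calc |(s • a + t • b) i| ≤ s * |a i| + t * |b i| := this
    _ < s * R + t * R := by
        rcases eq_or_lt_of_le hs with h | h
        · rcases eq_or_lt_of_le ht with h' | h'
          · exfalso; rw [← h, ← h'] at hst; norm_num at hst
          · simp only [← h, zero_mul, zero_add]
            exact mul_lt_mul_of_pos_left (hb i) h'
        · rcases eq_or_lt_of_le ht with h' | h'
          · simp only [← h', zero_mul, add_zero]
            exact mul_lt_mul_of_pos_left (ha i) h
          · exact add_lt_add (mul_lt_mul_of_pos_left (ha i) h)
              (mul_lt_mul_of_pos_left (hb i) h')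
    _ = R := by rw [← add_mul, hst, one_mul]

/-- **Sup-norm bound from values at a dense point set** (proof of Lemma 3.7). If a `C¹`
function `p` satisfies `sup_{cube} |∇p| ≤ C₀ sup_{cube} |p|`, is bounded by `1` at a point set
of fill distance at most `δ` in the cube, and `C₀ δ < 1`, then
`|p| ≤ 1/(1 − C₀ δ)` throughout the cube. -/
theorem sup_bound_from_grid_values (d : ℕ) (hd : 1 ≤ d) (R δ C₀ : ℝ)
    (hR : 0 < R) (hδ : 0 < δ) (hC₀ : 0 ≤ C₀) (hCδ : C₀ * δ < 1)
    (p : EuclideanSpace ℝ (Fin d) → ℝ) (hp : ContDiff ℝ 1 p)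
    (hgrad : ∀ x ∈ cube d R,
      ‖gradient p x‖ ≤ C₀ * sSup ((fun y => |p y|) '' cube d R))
    (N : ℕ) (x : Fin N → EuclideanSpace ℝ (Fin d)) (hx : ∀ j, x j ∈ cube d R)
    (hfill : ∀ y ∈ cube d R, ∃ j, dist y (x j) ≤ δ)
    (hpx : ∀ j, |p (x j)| ≤ 1) :
    ∀ y ∈ cube d R, |p y| ≤ 1 / (1 - C₀ * δ) := by
  set S := sSup ((fun y => |p y|) '' cube d R) with hS
  set K := C₀ * S with hK
  have h0cube : (0 : EuclideanSpace ℝ (Fin d)) ∈ cube d R := by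
    intro i; simpa using hR
  have hpos : 0 < 1 - C₀ * δ := by linarith
  -- fderiv norm equals gradient norm
  have hnorm : ∀ z, ‖fderiv ℝ p z‖ = ‖gradient p z‖ := by
    intro z
    rw [gradient]
    exact (LinearIsometryEquiv.norm_map (InnerProductSpace.toDual ℝ _).symm _).symm
  have hfd : ∀ z ∈ cube d R, HasFDerivWithinAt p (fderiv ℝ p z) (cube d R) z := by
    intro z _
    exact ((hp.differentiable one_ne_zero) z).hasFDerivAt.hasFDerivWithinAt
  have hbound : ∀ z ∈ cube d R, ‖fderiv ℝ p z‖ ≤ K := by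
    intro z hz; rw [hnorm]; exact hgrad z hz
  have hK0 : 0 ≤ K := le_trans (norm_nonneg _) (hbound 0 h0cube)
  -- MVT bound: for all y in cube, |p y| ≤ 1 + K * δ
  have key : ∀ y ∈ cube d R, |p y| ≤ 1 + K * δ := by
    intro y hy
    obtain ⟨j, hj⟩ := hfill y hy
    have hmvt := (cube_convex d R).norm_image_sub_le_of_norm_hasFDerivWithin_le hfd hbound
      (hx j) hy
    have hdist : ‖y - x j‖ ≤ δ := by rwa [← dist_eq_norm]
    have : |p y - p (x j)| ≤ K * δ := by
      calc |p y - p (x j)| = ‖p y - p (x j)‖ := rfl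
        _ ≤ K * ‖y - x j‖ := hmvt
        _ ≤ K * δ := mul_le_mul_of_nonneg_left hdist hK0
    calc |p y| ≤ |p (x j)| + |p y - p (x j)| := by
          have := abs_add_le (p (x j)) (p y - p (x j)); simpa using this
      _ ≤ 1 + K * δ := add_le_add (hpx j) this
  intro y hy
  by_cases hbdd : BddAbove ((fun y => |p y|) '' cube d R)
  · have hne : ((fun y => |p y|) '' cube d R).Nonempty := ⟨|p 0|, 0, h0cube, rfl⟩
    have hSle : S ≤ 1 + K * δ := csSup_le hne (by rintro _ ⟨z, hz, rfl⟩; exact key z hz)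
    have hSbound : S ≤ 1 / (1 - C₀ * δ) := by
      rw [le_div_iff₀ hpos]
      have hKδ : K * δ = C₀ * S * δ := by rw [hK]
      nlinarith [hSle, hKδ]
    have hyS : |p y| ≤ S := le_csSup hbdd ⟨y, hy, rfl⟩
    linarith
  · have hS0 : S = 0 := by
      rw [hS, csSup_of_not_bddAbove hbdd, Real.sSup_empty]
    have : |p y| ≤ 1 := by
      have := key y hy
      rw [hK, hS0] at this
      simpa using this
    have h1 : (1 : ℝ) ≤ 1 / (1 - C₀ * δ) := by
      rw [le_div_iff₀ hpos]
      have := mul_nonneg hC₀ hδ.le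
      linarith
    linarith
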